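/- For 0 < τ < 1/2 define β_τ(r) = (1/(24τ⁵))((2r−1)/2)⁶ − (5/(8τ))((2r−1)/2)² + (6−5τ)/12. Then for all r ∈ [(1−2τ)/2, (1+2τ)/2] one has (1−2τ)/2 ≤ β_τ(r) ≤ (6−5τ)/12 and |β_τ'(r)| ≤ 1. -/

import Mathlib

/-- For `0 < τ < 1/2`, the polynomial
`β_τ(r) = (1/(24τ⁵))((2r−1)/2)⁶ − (5/(8τ))((2r−1)/2)² + (6−5τ)/12` satisfies, for all
`r ∈ [(1−2τ)/2, (1+2τ)/2]`, the bounds `(1−2τ)/2 ≤ β_τ(r) ≤ (6−5τ)/12` and `|β_τ'(r)| ≤ 1`. -/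
theorem stmt_7 (τ : ℝ) (hτ0 : 0 < τ) (hτ : τ < 1 / 2) (β : ℝ → ℝ)
    (hβ : ∀ r : ℝ, β r = 1 / (24 * τ ^ 5) * ((2 * r - 1) / 2) ^ 6
      - 5 / (8 * τ) * ((2 * r - 1) / 2) ^ 2 + (6 - 5 * τ) / 12) :
    ∀ r ∈ Set.Icc ((1 - 2 * τ) / 2) ((1 + 2 * τ) / 2),
      (1 - 2 * τ) / 2 ≤ β r ∧ β r ≤ (6 - 5 * τ) / 12 ∧ |deriv β r| ≤ 1 := by
  intro r hr
  obtain ⟨h1, h2⟩ := hr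
  obtain ⟨s, hsdef⟩ : ∃ s : ℝ, (2 * r - 1) / 2 = s := ⟨_, rfl⟩
  have hβr : β r = 1 / (24 * τ ^ 5) * s ^ 6 - 5 / (8 * τ) * s ^ 2 + (6 - 5 * τ) / 12 := by
    rw [hβ r, hsdef]
  have hs1 : -τ ≤ s := by rw [← hsdef]; linarith
  have hs2 : s ≤ τ := by rw [← hsdef]; linarith
  have hA : (0:ℝ) ≤ τ + s := by linarith
  have hB : (0:ℝ) ≤ τ - s := by linarith
  have hτ5 : (0:ℝ) < 24 * τ ^ 5 := by positivity
  have hss : s ^ 2 ≤ τ ^ 2 := by nlinarith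
  refine ⟨?_, ?_, ?_⟩
  · have key : (0:ℝ) ≤ s ^ 6 - 15 * τ ^ 4 * s ^ 2 + 14 * τ ^ 6 := by
      nlinarith [mul_nonneg (sub_nonneg.2 hss) (sq_nonneg s), sq_nonneg (s ^ 2 - τ ^ 2),
        mul_nonneg (mul_nonneg (sub_nonneg.2 hss) (sq_nonneg τ)) (sq_nonneg τ),
        mul_nonneg (sub_nonneg.2 hss) (mul_nonneg (sq_nonneg s) (sq_nonneg τ))]
    have heq : 1 / (24 * τ ^ 5) * s ^ 6 - 5 / (8 * τ) * s ^ 2 + (6 - 5 * τ) / 12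
        - (1 - 2 * τ) / 2 = (s ^ 6 - 15 * τ ^ 4 * s ^ 2 + 14 * τ ^ 6) / (24 * τ ^ 5) := by
      field_simp
      ring
    rw [hβr]
    linarith [div_nonneg key hτ5.le, heq]
  · have key : s ^ 6 - 15 * τ ^ 4 * s ^ 2 ≤ 0 := by
      nlinarith [mul_nonneg (mul_nonneg (sub_nonneg.2 hss)
          (by positivity : (0:ℝ) ≤ τ ^ 2 + s ^ 2)) (sq_nonneg s),
        mul_nonneg (mul_nonneg (sq_nonneg τ) (sq_nonneg τ)) (sq_nonneg s)]
    have heq : 1 / (24 * τ ^ 5) * s ^ 6 - 5 / (8 * τ) * s ^ 2 + (6 - 5 * τ) / 12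
        - (6 - 5 * τ) / 12 = (s ^ 6 - 15 * τ ^ 4 * s ^ 2) / (24 * τ ^ 5) := by
      field_simp
      ring
    rw [hβr]
    linarith [div_nonpos_of_nonpos_of_nonneg key hτ5.le, heq]
  · have hβf : β = fun r => 1 / (24 * τ ^ 5) * ((2 * r - 1) / 2) ^ 6
        - 5 / (8 * τ) * ((2 * r - 1) / 2) ^ 2 + (6 - 5 * τ) / 12 := funext hβ
    have hu : HasDerivAt (fun r : ℝ => (2 * r - 1) / 2) 1 r := by
      have := (((hasDerivAt_id r).const_mul 2).sub_const 1).div_const 2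
      simpa using this
    have h6 := (hu.pow 6).const_mul (1 / (24 * τ ^ 5))
    have h2' := (hu.pow 2).const_mul (5 / (8 * τ))
    have hd := (h6.sub h2').add_const ((6 - 5 * τ) / 12)
    have hdv : deriv β r = 1 / (24 * τ ^ 5) * (6 * s ^ 5) - 5 / (8 * τ) * (2 * s) := by
      have hd' : HasDerivAt (fun r => 1 / (24 * τ ^ 5) * ((2 * r - 1) / 2) ^ 6 - 5 / (8 * τ) * ((2 * r - 1) / 2) ^ 2 + (6 - 5 * τ) / 12) _ r := hd
      rw [hβf, hd'.deriv, hsdef]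
      push_cast
      ring
    rw [hdv]
    have heq : 1 / (24 * τ ^ 5) * (6 * s ^ 5) - 5 / (8 * τ) * (2 * s)
        = (s ^ 5 - 5 * τ ^ 4 * s) / (4 * τ ^ 5) := by
      field_simp
      ring
    rw [heq, abs_div, abs_of_pos (by positivity : (0:ℝ) < 4 * τ ^ 5),
      div_le_one (by positivity), abs_le]
    clear hd h6 h2' hu hβf hdv heq hβr hβ h1 h2 hsdef
    have hq1 : (0:ℝ) ≤ s ^ 2 - τ * s + 2 * τ ^ 2 := by nlinarith [sq_nonneg (2 * s - τ)]
    have hq2 : (0:ℝ) ≤ s ^ 2 + τ * s + 2 * τ ^ 2 := by nlinarith [sq_nonneg (2 * s + τ)]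
    have hR : (0:ℝ) ≤ -s ^ 3 + 2 * τ * s ^ 2 - 3 * τ ^ 2 * s + 4 * τ ^ 3 := by
      have e : (τ - s) * (s ^ 2 - τ * s + 2 * τ ^ 2)
          = -s ^ 3 + 2 * τ * s ^ 2 - 3 * τ ^ 2 * s + 2 * τ ^ 3 := by ring
      linarith [mul_nonneg hB hq1, pow_pos hτ0 3, e]
    have hS : (0:ℝ) ≤ s ^ 3 + 2 * τ * s ^ 2 + 3 * τ ^ 2 * s + 4 * τ ^ 3 := by
      have e : (τ + s) * (s ^ 2 + τ * s + 2 * τ ^ 2)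
          = s ^ 3 + 2 * τ * s ^ 2 + 3 * τ ^ 2 * s + 2 * τ ^ 3 := by ring
      linarith [mul_nonneg hA hq2, pow_pos hτ0 3, e]
    constructor
    · have e : (τ - s) ^ 2 * (s ^ 3 + 2 * τ * s ^ 2 + 3 * τ ^ 2 * s + 4 * τ ^ 3)
          = s ^ 5 - 5 * τ ^ 4 * s + 4 * τ ^ 5 := by ring
      linarith [mul_nonneg (sq_nonneg (τ - s)) hS, e]
    · have e : (τ + s) ^ 2 * (-s ^ 3 + 2 * τ * s ^ 2 - 3 * τ ^ 2 * s + 4 * τ ^ 3)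
          = -(s ^ 5 - 5 * τ ^ 4 * s) + 4 * τ ^ 5 := by ring
      linarith [mul_nonneg (sq_nonneg (τ + s)) hR, e]
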